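/- Any solution X of the discrete Riccati equation X(pt) = (b_1·pt·X + b_1 b_5 - (p b_1^2 + b_5^2) t)/(b_1 b_5 (X - b_5 t)) satisfies the symmetric q-P(E_6^{(1)}) equation (X(pt) X(t) - 1)(X(t) X(p^{-1}t) - 1) = t^2 (X - b_1)(X - b_1^{-1})(X - b_3)(X - b_3^{-1})/((X - b_5 t)(X - b_5^{-1} t)) provided b_5^2 = p b_1 b_3. -/

import Mathlib

set_option maxHeartbeats 2000000


/-- Any solution `X` of the discrete Riccati equation
`X(pt) = (b₁·pt·X + b₁b₅ - (pb₁² + b₅²)t)/(b₁b₅(X - b₅t))` satisfies the symmetric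
q-P(E₆⁽¹⁾) equation
`(X(pt)X(t)-1)(X(t)X(p⁻¹t)-1) = t²(X-b₁)(X-b₁⁻¹)(X-b₃)(X-b₃⁻¹)/((X-b₅t)(X-b₅⁻¹t))`
provided `b₅² = p b₁ b₃`. -/
theorem symQPE6_of_riccati (p b1 b3 b5 : ℂ) (hp : p ≠ 0) (hb1 : b1 ≠ 0) (hb3 : b3 ≠ 0)
    (hb5 : b5 ≠ 0) (X : ℂ → ℂ)
    (hden1 : ∀ t, X t - b5 * t ≠ 0) (hden2 : ∀ t, X t - b5⁻¹ * t ≠ 0)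
    (hRic : ∀ t, X (p * t)
      = (b1 * (p * t) * X t + b1 * b5 - (p * b1 ^ 2 + b5 ^ 2) * t) / (b1 * b5 * (X t - b5 * t)))
    (hcond : b5 ^ 2 = p * b1 * b3) :
    ∀ t, (X (p * t) * X t - 1) * (X t * X (p⁻¹ * t) - 1)
      = t ^ 2 * (X t - b1) * (X t - b1⁻¹) * (X t - b3) * (X t - b3⁻¹)
          / ((X t - b5 * t) * (X t - b5⁻¹ * t)) := by
  intro t
  have h1 := hden1 t
  have h2 := hden2 t
  have h1' := hden1 (p⁻¹ * t)
  have hb3' : b3 = b5 ^ 2 / (p * b1) := by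
    field_simp
    linear_combination (-1 : ℂ) * hcond
  have hC := hRic (p⁻¹ * t)
  rw [show p * (p⁻¹ * t) = t by field_simp] at hC
  have hdC : b1 * (b5 * X t - t) ≠ 0 := by
    have : b5 * X t - t = b5 * (X t - b5⁻¹ * t) := by field_simp
    rw [this]
    exact mul_ne_zero hb1 (mul_ne_zero hb5 h2)
  have hCeq : X (p⁻¹ * t)
      = (X t * b1 * b5 ^ 2 * p⁻¹ * t + b1 * b5 - (p * b1 ^ 2 + b5 ^ 2) * (p⁻¹ * t))
        / (b1 * (b5 * X t - t)) := by
    rw [eq_div_iff hdC]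
    have hd2 : b1 * b5 * (X (p⁻¹ * t) - b5 * (p⁻¹ * t)) ≠ 0 :=
      mul_ne_zero (mul_ne_zero hb1 hb5) h1'
    have hC2 : X t * (b1 * b5 * (X (p⁻¹ * t) - b5 * (p⁻¹ * t)))
        = b1 * t * X (p⁻¹ * t) + b1 * b5 - (p * b1 ^ 2 + b5 ^ 2) * (p⁻¹ * t) := by
      rw [hC, div_mul_cancel₀ _ hd2]
    field_simp at hC2 ⊢
    linear_combination hC2
  have hdB : b1 * b5 * (X t - b5 * t) ≠ 0 := mul_ne_zero (mul_ne_zero hb1 hb5) h1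
  have hB2 : X (p * t) * (b1 * b5 * (X t - b5 * t))
      = b1 * (p * t) * X t + b1 * b5 - (p * b1 ^ 2 + b5 ^ 2) * t := by
    rw [hRic t]; exact div_mul_cancel₀ _ hdB
  have hC3 : X (p⁻¹ * t) * (b1 * (b5 * X t - t))
      = X t * b1 * b5 ^ 2 * p⁻¹ * t + b1 * b5 - (p * b1 ^ 2 + b5 ^ 2) * (p⁻¹ * t) := by
    rw [hCeq]; exact div_mul_cancel₀ _ hdC
  have hBA : (X (p * t) * X t - 1) * (b1 * b5 * (X t - b5 * t))
      = (b1 * (p * t) * X t + b1 * b5 - (p * b1 ^ 2 + b5 ^ 2) * t) * X t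
        - b1 * b5 * (X t - b5 * t) := by
    linear_combination X t * hB2
  have hCA : (X t * X (p⁻¹ * t) - 1) * (b1 * (b5 * X t - t))
      = (X t * b1 * b5 ^ 2 * p⁻¹ * t + b1 * b5 - (p * b1 ^ 2 + b5 ^ 2) * (p⁻¹ * t)) * X t
        - b1 * (b5 * X t - t) := by
    linear_combination X t * hC3
  have key : ((b1 * (p * t) * X t + b1 * b5 - (p * b1 ^ 2 + b5 ^ 2) * t) * X t
        - b1 * b5 * (X t - b5 * t))
      * ((X t * b1 * b5 ^ 2 * p⁻¹ * t + b1 * b5 - (p * b1 ^ 2 + b5 ^ 2) * (p⁻¹ * t)) * X t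
        - b1 * (b5 * X t - t))
      * ((X t - b5 * t) * (X t - b5⁻¹ * t))
      = (t ^ 2 * (X t - b1) * (X t - b1⁻¹) * (X t - b3) * (X t - b3⁻¹))
        * ((b1 * b5 * (X t - b5 * t)) * (b1 * (b5 * X t - t))) := by
    rw [hb3']
    field_simp
    ring
  rw [eq_div_iff (mul_ne_zero h1 h2)]
  apply mul_left_cancel₀ (mul_ne_zero hdB hdC)
  linear_combination
    ((X t * X (p⁻¹ * t) - 1) * ((X t - b5 * t) * (X t - b5⁻¹ * t)) * (b1 * (b5 * X t - t))) * hBA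
    + (((b1 * (p * t) * X t + b1 * b5 - (p * b1 ^ 2 + b5 ^ 2) * t) * X t
        - b1 * b5 * (X t - b5 * t)) * ((X t - b5 * t) * (X t - b5⁻¹ * t))) * hCA
    + key
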